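/- Every countable dense subspace of the Cantor cube D(2)^𝔠 is homeomorphic to a dense subspace of the Tychonov cube [0,1]^𝔠. -/
import Mathlib


open Cardinal Set

noncomputable section Aux16

namespace Aux16

/-- weights of binary digits -/
def w (n : ℕ) : ℝ := (2:ℝ)⁻¹ ^ (n+1)

lemma w_pos (n : ℕ) : 0 < w n := by unfold w; positivity

lemma w_eq (n : ℕ) : w n = (2:ℝ)⁻¹ ^ n * 2⁻¹ := by unfold w; rw [pow_succ]

lemma w_succ (n : ℕ) : w (n+1) = 2⁻¹ * w n := by unfold w; ring

lemma summable_w : Summable w := by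
  have h : Summable (fun n : ℕ => (2:ℝ)⁻¹ ^ n) :=
    summable_geometric_of_lt_one (by norm_num) (by norm_num)
  have h2 := h.mul_right (2:ℝ)⁻¹
  have hw : w = fun n : ℕ => (2:ℝ)⁻¹ ^ n * 2⁻¹ := funext w_eq
  rw [hw]; exact h2

lemma tsum_w : ∑' n, w n = 1 := by
  have h : ∑' n : ℕ, (2:ℝ)⁻¹ ^ n = 2 := by
    rw [tsum_geometric_of_lt_one (by norm_num) (by norm_num)]; norm_num
  calc ∑' n, w n = ∑' n : ℕ, 2⁻¹ * (2:ℝ)⁻¹ ^ n := by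
        apply tsum_congr; intro n; rw [w_eq]; ring
    _ = 2⁻¹ * ∑' n : ℕ, (2:ℝ)⁻¹ ^ n := tsum_mul_left
    _ = 1 := by rw [h]; norm_num

lemma sum_range_w (N : ℕ) : ∑ n ∈ Finset.range N, w n = 1 - (2:ℝ)⁻¹ ^ N := by
  induction N with
  | zero => simp
  | succ N ih =>
      rw [Finset.sum_range_succ, ih]
      unfold w
      rw [pow_succ]
      ring

lemma tsum_w_add (N : ℕ) : ∑' n, w (n + N) = (2:ℝ)⁻¹ ^ N := by
  have h1 : ∀ n : ℕ, w (n + N) = (2:ℝ)⁻¹ ^ N * w n := by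
    intro n; unfold w; rw [← pow_add]; ring_nf
  calc ∑' n, w (n + N) = ∑' n, (2:ℝ)⁻¹ ^ N * w n := tsum_congr h1
    _ = (2:ℝ)⁻¹ ^ N * ∑' n, w n := tsum_mul_left
    _ = (2:ℝ)⁻¹ ^ N := by rw [tsum_w, mul_one]

/-- the `n`-th binary term of a 0-1 sequence -/
def term (b : ℕ → Bool) (n : ℕ) : ℝ := if b n then w n else 0

lemma term_nonneg (b : ℕ → Bool) (n : ℕ) : 0 ≤ term b n := by
  unfold term; split
  · exact (w_pos n).le
  · exact le_rfl

lemma term_le_w (b : ℕ → Bool) (n : ℕ) : term b n ≤ w n := by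
  unfold term; split
  · exact le_rfl
  · exact (w_pos n).le

lemma summable_term (b : ℕ → Bool) : Summable (term b) :=
  Summable.of_nonneg_of_le (term_nonneg b) (term_le_w b) summable_w

/-- value of a binary sequence -/
def g (b : ℕ → Bool) : ℝ := ∑' n, term b n

/-- partial sum of the first `N` binary terms -/
def P (N : ℕ) (b : ℕ → Bool) : ℝ := ∑ n ∈ Finset.range N, term b n

lemma g_split (b : ℕ → Bool) (N : ℕ) :
    g b = P N b + ∑' n, term b (n + N) :=
  (Summable.sum_add_tsum_nat_add N (summable_term b)).symm

lemma tail_nonneg (b : ℕ → Bool) (N : ℕ) : 0 ≤ ∑' n, term b (n + N) :=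
  tsum_nonneg fun n => term_nonneg b _

lemma tail_le (b : ℕ → Bool) (N : ℕ) : ∑' n, term b (n + N) ≤ (2:ℝ)⁻¹ ^ N := by
  rw [← tsum_w_add N]
  exact Summable.tsum_le_tsum (fun n => term_le_w b _) ((summable_term b).comp_injective
    (add_left_injective N)) (summable_w.comp_injective (add_left_injective N))

lemma P_le_g (b : ℕ → Bool) (N : ℕ) : P N b ≤ g b := by
  rw [g_split b N]; linarith [tail_nonneg b N]

lemma g_le_P_add (b : ℕ → Bool) (N : ℕ) : g b ≤ P N b + (2:ℝ)⁻¹ ^ N := by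
  rw [g_split b N]; linarith [tail_le b N]

lemma P_lt_g (b : ℕ → Bool) (N i : ℕ) (hi : N ≤ i) (hb : b i = true) :
    P N b < g b := by
  rw [g_split b N]
  have h1 : term b (i - N + N) ≤ ∑' n, term b (n + N) :=
    Summable.le_tsum ((summable_term b).comp_injective (add_left_injective N)) _
      (fun j _ => term_nonneg b _)
  have h2 : i - N + N = i := Nat.sub_add_cancel hi
  rw [h2] at h1
  have h3 : term b i = w i := by unfold term; rw [hb]; simp
  nlinarith [w_pos i]

lemma g_lt_P_add (b : ℕ → Bool) (N i : ℕ) (hi : N ≤ i) (hb : b i = false) :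
    g b < P N b + (2:ℝ)⁻¹ ^ N := by
  rw [g_split b N, ← tsum_w_add N]
  have hlt : ∑' n, term b (n + N) < ∑' n, w (n + N) := by
    refine Summable.tsum_lt_tsum (i := i - N) (fun n => term_le_w b _) ?_
      ((summable_term b).comp_injective (add_left_injective N))
      (summable_w.comp_injective (add_left_injective N))
    have h2 : i - N + N = i := Nat.sub_add_cancel hi
    rw [h2]
    unfold term; rw [hb]; simpa using w_pos i
  linarith

lemma P_succ (b : ℕ → Bool) (N : ℕ) :
    P (N+1) b = term b 0 + 2⁻¹ * P N (fun n => b (n+1)) := by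
  unfold P
  rw [Finset.sum_range_succ' (term b) N, Finset.mul_sum]
  rw [add_comm]
  congr 1
  apply Finset.sum_congr rfl
  intro i _
  show term b (i+1) = 2⁻¹ * term (fun n => b (n+1)) i
  cases hb : b (i+1) <;> simp [term, hb, w_succ]

lemma P_nonneg (b : ℕ → Bool) (N : ℕ) : 0 ≤ P N b :=
  Finset.sum_nonneg fun i _ => term_nonneg b i

lemma P_le (b : ℕ → Bool) (N : ℕ) : P N b ≤ 1 - (2:ℝ)⁻¹ ^ N := by
  rw [← sum_range_w N]
  exact Finset.sum_le_sum fun i _ => term_le_w b i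

lemma prefix_inj : ∀ (N : ℕ) (b b' : ℕ → Bool),
    |P N b - P N b'| < (2:ℝ)⁻¹ ^ N → ∀ n < N, b n = b' n := by
  intro N
  induction N with
  | zero => intro b b' _ n hn; omega
  | succ N ih =>
      intro b b' habs n hn
      have key : ∀ c c' : ℕ → Bool, c 0 = true → c' 0 = false →
          (2:ℝ)⁻¹ ^ (N+1) ≤ P (N+1) c - P (N+1) c' := by
        intro c c' h1 h2
        rw [P_succ c N, P_succ c' N]
        have ht1 : term c 0 = 2⁻¹ := by unfold term w; rw [h1]; simp
        have ht2 : term c' 0 = 0 := by unfold term; rw [h2]; simp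
        rw [ht1, ht2]
        have hb1 := P_nonneg (fun n => c (n+1)) N
        have hb2 := P_le (fun n => c' (n+1)) N
        rw [pow_succ]
        nlinarith
      have h0 : b 0 = b' 0 := by
        by_contra hne
        rw [abs_sub_lt_iff] at habs
        cases hb : b 0 <;> cases hb' : b' 0
        · exact hne (by rw [hb, hb'])
        · have := key b' b hb' hb
          linarith [habs.2]
        · have := key b b' hb hb'
          linarith [habs.1]
        · exact hne (by rw [hb, hb'])
      match n, hn with
      | 0, _ => exact h0
      | (m+1), hm =>
          have hterm : term b 0 = term b' 0 := by unfold term; rw [h0]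
          have heq : P (N+1) b - P (N+1) b'
              = 2⁻¹ * (P N (fun n => b (n+1)) - P N (fun n => b' (n+1))) := by
            rw [P_succ b N, P_succ b' N, hterm]; ring
          have habs' : |P N (fun n => b (n+1)) - P N (fun n => b' (n+1))| < (2:ℝ)⁻¹ ^ N := by
            rw [heq] at habs
            rw [abs_mul] at habs
            have : |(2:ℝ)⁻¹| = 2⁻¹ := by norm_num
            rw [this, pow_succ] at habs
            nlinarith [abs_nonneg (P N (fun n => b (n+1)) - P N (fun n => b' (n+1)))]
          exact ih (fun n => b (n+1)) (fun n => b' (n+1)) habs' m (by omega)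

lemma P_congr (b d : ℕ → Bool) (N : ℕ) (h : ∀ k < N, b k = d k) : P N b = P N d := by
  unfold P
  apply Finset.sum_congr rfl
  intro i hi
  unfold term
  rw [h i (Finset.mem_range.mp hi)]

/-- goodness: the sequence is not eventually constant -/
def Good (b : ℕ → Bool) : Prop :=
  ∀ N, (∃ i, N ≤ i ∧ b i = true) ∧ (∃ i, N ≤ i ∧ b i = false)

lemma g_mem_Ioo {b : ℕ → Bool} (hb : Good b) (N : ℕ) :
    g b ∈ Ioo (P N b) (P N b + (2:ℝ)⁻¹ ^ N) := by
  obtain ⟨⟨i, hi, hit⟩, ⟨j, hj, hjf⟩⟩ := hb N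
  exact ⟨P_lt_g b N i hi hit, g_lt_P_add b N j hj hjf⟩

lemma prefix_determined (b b' : ℕ → Bool) (N : ℕ)
    (h : g b' ∈ Ioo (P N b) (P N b + (2:ℝ)⁻¹ ^ N)) :
    ∀ n < N, b' n = b n := by
  have h1 := P_le_g b' N
  have h2 := g_le_P_add b' N
  have habs : |P N b' - P N b| < (2:ℝ)⁻¹ ^ N := by
    rw [abs_sub_lt_iff]
    constructor <;> [linarith [h.2]; linarith [h.1]]
  exact prefix_inj N b' b habs

lemma g_nonneg (b : ℕ → Bool) : 0 ≤ g b := tsum_nonneg fun n => term_nonneg b n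

lemma g_le_one (b : ℕ → Bool) : g b ≤ 1 := by
  rw [← tsum_w]
  exact Summable.tsum_le_tsum (term_le_w b) (summable_term b) summable_w

/-- prepend a digit -/
def cons (a : Bool) (d : ℕ → Bool) : ℕ → Bool
  | 0 => a
  | (n+1) => d n

lemma approx : ∀ (N : ℕ) (v : ℝ), 0 ≤ v → v ≤ 1 →
    ∃ d : ℕ → Bool, v - (2:ℝ)⁻¹ ^ N ≤ P N d ∧ P N d ≤ v := by
  intro N
  induction N with
  | zero =>
      intro v h0 h1
      exact ⟨fun _ => false, by simp [P]; linarith, by simp [P]; linarith⟩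
  | succ N ih =>
      intro v h0 h1
      have hpow : (2:ℝ)⁻¹ ^ (N+1) = (2:ℝ)⁻¹ ^ N * 2⁻¹ := pow_succ _ _
      by_cases hv : v ≤ 2⁻¹
      · obtain ⟨d, hd1, hd2⟩ := ih (2*v) (by linarith) (by linarith)
        have hfd : (fun n => cons false d (n+1)) = d := funext fun n => rfl
        have hP : P (N+1) (cons false d) = 2⁻¹ * P N d := by
          rw [P_succ, hfd]; simp [term, cons]
        exact ⟨cons false d, by rw [hP]; nlinarith, by rw [hP]; nlinarith⟩
      · obtain ⟨d, hd1, hd2⟩ := ih (2*v - 1) (by linarith) (by linarith)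
        have hfd : (fun n => cons true d (n+1)) = d := funext fun n => rfl
        have hP : P (N+1) (cons true d) = 2⁻¹ + 2⁻¹ * P N d := by
          rw [P_succ, hfd]; simp [term, cons, w]
        exact ⟨cons true d, by rw [hP]; nlinarith, by rw [hP]; nlinarith⟩

lemma approx_in_open {W : Set ℝ} (hW : IsOpen W) {v : ℝ} (hv : v ∈ W)
    (h0 : 0 ≤ v) (h1 : v ≤ 1) :
    ∃ (N : ℕ) (d : ℕ → Bool), ∀ b : ℕ → Bool, (∀ k < N, b k = d k) → g b ∈ W := by
  obtain ⟨ε, hε, hball⟩ := Metric.isOpen_iff.mp hW v hv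
  obtain ⟨N, hN⟩ := exists_pow_lt_of_lt_one (x := ε/2) (y := (2:ℝ)⁻¹) (by linarith) (by norm_num)
  obtain ⟨d, hd1, hd2⟩ := approx N v h0 h1
  refine ⟨N, d, fun b hb => ?_⟩
  apply hball
  rw [Metric.mem_ball, Real.dist_eq]
  have hPb : P N b = P N d := P_congr b d N hb
  have hg1 := P_le_g b N
  have hg2 := g_le_P_add b N
  rw [hPb] at hg1 hg2
  rw [abs_sub_lt_iff]
  constructor <;> nlinarith

lemma xor_cancel (a a' u : Bool) (h : xor a u = xor a' u) : a = a' := by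
  cases a <;> cases a' <;> cases u <;> simp_all

lemma xor_xor (a u : Bool) : xor (xor a u) u = a := by
  cases a <;> cases u <;> rfl

section Main

variable {C : Type}

/-- the coordinate blocks -/
def xx (κ : C ≃ C × ℕ) (c : C) (n : ℕ) : C := κ.symm (c, n)

lemma xx_spec (κ : C ≃ C × ℕ) (c₀ : C) : xx κ (κ c₀).1 (κ c₀).2 = c₀ := by
  simp [xx]

lemma κ_xx (κ : C ≃ C × ℕ) (c : C) (k : ℕ) : κ (xx κ c k) = (c, k) := by simp [xx]

/-- the mask -/
def mask (κ : C ≃ C × ℕ) (σ : ℕ → C → Bool) (c : C) (k : ℕ) : Bool :=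
  if k % 2 = 0 then σ (Nat.unpair (k/2)).1 (xx κ c k)
  else !(σ (Nat.unpair (k/2)).1 (xx κ c k))

/-- the masked digits -/
def dig (κ : C ≃ C × ℕ) (σ : ℕ → C → Bool) (s : C → Bool) (c : C) (k : ℕ) : Bool :=
  xor (s (xx κ c k)) (mask κ σ c k)

lemma dig_good (κ : C ≃ C × ℕ) (σ : ℕ → C → Bool) (m : ℕ) (c : C) :
    Good (dig κ σ (σ m) c) := by
  intro N
  have hpN : N ≤ Nat.pair m N := Nat.right_le_pair m N
  constructor
  · refine ⟨2 * Nat.pair m N + 1, by omega, ?_⟩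
    unfold dig mask
    have h2 : ¬((2 * Nat.pair m N + 1) % 2 = 0) := by omega
    have h3 : (2 * Nat.pair m N + 1) / 2 = Nat.pair m N := by omega
    rw [if_neg h2, h3, Nat.unpair_pair]
    simp
  · refine ⟨2 * Nat.pair m N, by omega, ?_⟩
    unfold dig mask
    have h2 : (2 * Nat.pair m N) % 2 = 0 := by omega
    have h3 : (2 * Nat.pair m N) / 2 = Nat.pair m N := by omega
    rw [if_pos h2, h3, Nat.unpair_pair]
    simp

lemma recover (κ : C ≃ C × ℕ) (σ : ℕ → C → Bool) (s s' : C → Bool) (c₀ : C)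
    (h : g (dig κ σ s' (κ c₀).1) ∈ Ioo (P ((κ c₀).2+1) (dig κ σ s (κ c₀).1))
      (P ((κ c₀).2+1) (dig κ σ s (κ c₀).1) + (2:ℝ)⁻¹ ^ ((κ c₀).2+1))) :
    s' c₀ = s c₀ := by
  have hpd := prefix_determined _ _ _ h (κ c₀).2 (lt_add_one _)
  have h2 : s' (xx κ (κ c₀).1 (κ c₀).2) = s (xx κ (κ c₀).1 (κ c₀).2) :=
    xor_cancel _ _ _ hpd
  rwa [xx_spec] at h2

end Main

end Aux16


end Aux16

open Aux16 in
/-- Every countable dense subspace of the Cantor cube `D(2)^𝔠` is homeomorphic to a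
dense subspace of the Tychonov cube `[0,1]^𝔠`. -/
theorem stmt_16 (C : Type) (hC : #C = Cardinal.continuum)
    (S : Set (C → Bool)) (hcount : S.Countable) (hdense : Dense S) :
    ∃ T : Set (C → ↥(Set.Icc (0 : ℝ) 1)), Dense T ∧ Nonempty (↥S ≃ₜ ↥T) := by
  classical
  have hCN : #C = #(C × ℕ) := by
    rw [Cardinal.mk_prod, Cardinal.lift_id, Cardinal.lift_id, Cardinal.mk_nat, hC,
      Cardinal.mul_eq_left Cardinal.aleph0_le_continuum Cardinal.aleph0_le_continuum
        Cardinal.aleph0_ne_zero]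
  obtain ⟨κ⟩ := Cardinal.eq.mp hCN
  have hne : Nonempty (C → Bool) := ⟨fun _ => false⟩
  have hSne : S.Nonempty := hdense.nonempty
  have hcnt : Countable ↥S := hcount.to_subtype
  have hnes : Nonempty ↥S := hSne.to_subtype
  obtain ⟨σ₀, hσ₀⟩ := exists_surjective_nat ↥S
  set σ : ℕ → C → Bool := fun n => (σ₀ n).1 with hσdef
  have hgood : ∀ (s : ↥S) (c : C), Good (dig κ σ s.1 c) := by
    intro s c
    obtain ⟨m, hm⟩ := hσ₀ s
    have hs : σ m = s.1 := congrArg Subtype.val hm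
    rw [← hs]
    exact dig_good κ σ m c
  have hmem : ∀ (s : C → Bool) (c : C), g (dig κ σ s c) ∈ Icc (0:ℝ) 1 :=
    fun s c => ⟨g_nonneg _, g_le_one _⟩
  set e' : ↥S → C → ↥(Icc (0:ℝ) 1) := fun s c => ⟨g (dig κ σ s.1 c), hmem s.1 c⟩ with he'def
  -- recovery of a coordinate from the value
  have hrec : ∀ (s s' : ↥S) (c₀ : C),
      g (dig κ σ s'.1 (κ c₀).1) ∈ Ioo (P ((κ c₀).2+1) (dig κ σ s.1 (κ c₀).1))
        (P ((κ c₀).2+1) (dig κ σ s.1 (κ c₀).1) + (2:ℝ)⁻¹ ^ ((κ c₀).2+1)) →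
      s'.1 c₀ = s.1 c₀ :=
    fun s s' c₀ h => recover κ σ s.1 s'.1 c₀ h
  have hinj : Function.Injective e' := by
    intro s s' h
    apply Subtype.ext; funext c₀
    refine (hrec s s' c₀ ?_).symm
    have hval : g (dig κ σ s'.1 (κ c₀).1) = g (dig κ σ s.1 (κ c₀).1) := by
      have := congrFun h (κ c₀).1
      exact (congrArg Subtype.val this).symm
    rw [hval]
    exact g_mem_Ioo (hgood s (κ c₀).1) _
  have hecont : Continuous e' := by
    apply continuous_pi
    intro c
    apply Continuous.subtype_mk
    show Continuous fun s : ↥S => ∑' n, term (dig κ σ s.1 c) n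
    refine continuous_tsum (fun n => ?_) summable_w (fun n s => ?_)
    · have h1 : Continuous fun s : ↥S => s.1 (xx κ c n) :=
        (continuous_apply (xx κ c n)).comp continuous_subtype_val
      have h2 : Continuous fun v : Bool => if (xor v (mask κ σ c n)) = true then w n else 0 :=
        continuous_of_discreteTopology
      exact h2.comp h1
    · rw [Real.norm_eq_abs, abs_of_nonneg (term_nonneg _ _)]
      exact term_le_w _ _
  -- the image
  have hTmem : ∀ y : ↥(Set.range e'), ∃ s : ↥S, e' s = y.1 := fun y => y.2
  set F : ↥(Set.range e') → C → Bool := fun y => ((hTmem y).choose).1 with hFdef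
  have hFspec : ∀ y : ↥(Set.range e'), e' (hTmem y).choose = y.1 := fun y => (hTmem y).choose_spec
  have hFS : ∀ y : ↥(Set.range e'), F y ∈ S := fun y => ((hTmem y).choose).2
  have hFcont : Continuous F := by
    rw [continuous_iff_continuousAt]
    intro y₀
    rw [continuousAt_pi]
    intro c₀
    have hIoo := g_mem_Ioo (hgood (hTmem y₀).choose (κ c₀).1) ((κ c₀).2 + 1)
    set b : ℕ → Bool := dig κ σ ((hTmem y₀).choose).1 (κ c₀).1 with hbdef
    set lo : ℝ := P ((κ c₀).2+1) b with hlodef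
    set hi : ℝ := lo + (2:ℝ)⁻¹ ^ ((κ c₀).2+1) with hhidef
    set V : Set ↥(Set.range e') := {y | (↑(y.1 (κ c₀).1) : ℝ) ∈ Ioo lo hi} with hVdef
    have hVopen : IsOpen V := by
      have hcont : Continuous fun y : ↥(Set.range e') => (↑(y.1 (κ c₀).1) : ℝ) :=
        continuous_subtype_val.comp ((continuous_apply (κ c₀).1).comp continuous_subtype_val)
      exact IsOpen.preimage hcont isOpen_Ioo
    have hy₀ : y₀ ∈ V := by
      show (↑(y₀.1 (κ c₀).1) : ℝ) ∈ Ioo lo hi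
      rw [← hFspec y₀]
      exact hIoo
    have hconst : ∀ y ∈ V, F y c₀ = F y₀ c₀ := by
      intro y hy
      have h1 : (↑(y.1 (κ c₀).1) : ℝ) = g (dig κ σ (F y) (κ c₀).1) := by
        rw [← hFspec y]
      have h2 : g (dig κ σ (F y) (κ c₀).1) ∈ Ioo lo hi := by rw [← h1]; exact hy
      exact hrec (hTmem y₀).choose ⟨F y, hFS y⟩ c₀ h2
    have hev : (fun y => F y c₀) =ᶠ[nhds y₀] (fun _ => F y₀ c₀) :=
      Filter.eventually_of_mem (hVopen.mem_nhds hy₀) hconst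
    exact Filter.Tendsto.congr' hev.symm tendsto_const_nhds
  -- density
  have hdenseT : Dense (Set.range e') := by
    rw [dense_iff_inter_open]
    intro U hU hUne
    obtain ⟨u₀, hu₀⟩ := hUne
    obtain ⟨I, V, hIV, hVsub⟩ := isOpen_pi_iff.mp hU u₀ hu₀
    have hWex : ∀ c : C, ∃ (N : ℕ) (d : ℕ → Bool),
        c ∈ I → ∀ b : ℕ → Bool, (∀ k < N, b k = d k) →
          (⟨g b, ⟨g_nonneg b, g_le_one b⟩⟩ : ↥(Icc (0:ℝ) 1)) ∈ V c := by
      intro c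
      by_cases hc : c ∈ I
      · obtain ⟨hVo, hVmem⟩ := hIV c hc
        obtain ⟨W, hWo, hWeq⟩ := isOpen_induced_iff.mp hVo
        have hvW : ((u₀ c : ℝ)) ∈ W := by
          rw [← hWeq] at hVmem; exact hVmem
        obtain ⟨N, d, hNd⟩ := approx_in_open hWo hvW (u₀ c).2.1 (u₀ c).2.2
        refine ⟨N, d, fun _ b hb => ?_⟩
        rw [← hWeq]
        exact hNd b hb
      · exact ⟨0, fun _ => false, fun h => absurd h hc⟩
    choose N d hNd using hWex
    obtain ⟨u, hu⟩ : ∃ u : C → Bool, ∀ c₀,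
        u c₀ = xor (d (κ c₀).1 (κ c₀).2) (mask κ σ (κ c₀).1 (κ c₀).2) := ⟨_, fun _ => rfl⟩
    have hAopen : IsOpen {v : C → Bool |
        ∀ a ∈ (I.biUnion fun c => (Finset.range (N c)).image (xx κ c)), v a = u a} := by
      have heq : {v : C → Bool |
          ∀ a ∈ (I.biUnion fun c => (Finset.range (N c)).image (xx κ c)), v a = u a} =
          Set.pi (↑(I.biUnion fun c => (Finset.range (N c)).image (xx κ c)) : Set C)
            (fun a => {u a}) := by
        ext v; simp [Set.mem_pi]
      rw [heq]
      exact isOpen_set_pi (Finset.finite_toSet _) (fun a _ => isOpen_discrete _)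
    obtain ⟨s, hsS, hs⟩ := hdense.exists_mem_open hAopen ⟨u, fun a _ => rfl⟩
    refine ⟨e' ⟨s, hsS⟩, hVsub ?_, Set.mem_range_self _⟩
    intro c hcI
    have hbits : ∀ k < N c, dig κ σ s c k = d c k := by
      intro k hk
      have hxmem : xx κ c k ∈ (I.biUnion fun c => (Finset.range (N c)).image (xx κ c)) :=
        Finset.mem_biUnion.mpr ⟨c, hcI, Finset.mem_image.mpr ⟨k, Finset.mem_range.mpr hk, rfl⟩⟩
      have hs' : s (xx κ c k) = u (xx κ c k) := hs (xx κ c k) hxmem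
      have hu' : u (xx κ c k) = xor (d c k) (mask κ σ c k) := by
        rw [hu (xx κ c k), κ_xx]
      show xor (s (xx κ c k)) (mask κ σ c k) = d c k
      rw [hs', hu', xor_xor]
    exact hNd c hcI (dig κ σ s c) hbits
  refine ⟨Set.range e', hdenseT, ⟨{
    toFun := fun s => ⟨e' s, Set.mem_range_self s⟩
    invFun := fun y => ⟨F y, hFS y⟩
    left_inv := fun s => hinj (hFspec ⟨e' s, Set.mem_range_self s⟩)
    right_inv := fun y => Subtype.ext (hFspec y)
    continuous_toFun := Continuous.subtype_mk hecont _
    continuous_invFun := Continuous.subtype_mk hFcont hFS }⟩⟩
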